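/- For an arbitrary tuple S (i.e., an arbitrary deformation of the braid arrangement A_S) and every tree T ∈ T^(m)(n), the contribution of T satisfies r_S(T) ∈ {−1, 0, 1}. -/

import Mathlib

open scoped Classical

/-- The derived sets `S⁻ᵢⱼ` of nonnegative integers:
for `i < j`, `S⁻ᵢⱼ = {s ≥ 0 : -s ∈ Sᵢⱼ}`, and `S⁻ⱼᵢ = {0} ∪ {s > 0 : s ∈ Sᵢⱼ}`. -/
def Sminus {n : ℕ} (S : Fin n → Fin n → Finset ℤ) (i j : Fin n) : Set ℕ :=
  if i < j then {s : ℕ | -(s : ℤ) ∈ S i j}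
  else {0} ∪ {s : ℕ | 0 < s ∧ (s : ℤ) ∈ S j i}

/-- `m`: the maximal absolute value of an element of some `S i j` (`i < j`). -/
def mOf {n : ℕ} (S : Fin n → Fin n → Finset ℤ) : ℕ :=
  Finset.univ.sup fun p : Fin n × Fin n =>
    if p.1 < p.2 then (S p.1 p.2).sup (fun s => s.natAbs) else 0

/-- A rooted labeled plane tree with `n` nodes (labeled by `Fin n`, index `i` representing
the label `i+1`, so the node `1` is `(0 : Fin n)`), each node having exactly `m+1`
linearly ordered children; children that are not nodes are unlabeled leaves and carry no
further data. `parent v` is the parent node of the node `v` (with the convention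
`parent root = root`), and `pos v` is the position of `v` among the `m+1` children of its
parent, so `(pos v : ℕ)` is the number `lsib v` of left siblings of `v`. -/
structure PlaneTree (n m : ℕ) where
  root : Fin n
  parent : Fin n → Fin n
  pos : Fin n → Fin (m + 1)
  parent_root : parent root = root
  reaches_root : ∀ v : Fin n, ∃ k : ℕ, parent^[k] v = root
  pos_inj : ∀ v w : Fin n, v ≠ root → w ≠ root → parent v = parent w → pos v = pos w → v = w

namespace PlaneTree

variable {n m : ℕ}

/-- `v` is a child of `u` (among the nodes). -/
def IsChild (T : PlaneTree n m) (v u : Fin n) : Prop :=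
  v ≠ T.root ∧ T.parent v = u

/-- `v` is the cadet of `u`: the rightmost child of `u` that is a node. -/
def IsCadet (T : PlaneTree n m) (u v : Fin n) : Prop :=
  T.IsChild v u ∧ ∀ w : Fin n, T.IsChild w u → T.pos w ≤ T.pos v

/-- The number of left siblings of `v`. -/
def lsib (T : PlaneTree n m) (v : Fin n) : ℕ := (T.pos v : ℕ)

end PlaneTree

/-- `(v a, v (a+1), …, v b)` is a cadet sequence of `T` (1-indexed, `1 ≤ a ≤ b`). -/
def IsCadetWindow {n m : ℕ} (T : PlaneTree n m) (v : ℕ → Fin n) (a b : ℕ) : Prop :=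
  1 ≤ a ∧ a ≤ b ∧ ∀ p : ℕ, a < p → p ≤ b → T.IsCadet (v (p - 1)) (v p)

/-- `v` is injective on the indices `a, …, b`. -/
def WindowInj {n : ℕ} (v : ℕ → Fin n) (a b : ℕ) : Prop :=
  ∀ p q : ℕ, a ≤ p → p ≤ b → a ≤ q → q ≤ b → v p = v q → p = q

/-- `(v a, …, v b)` is an `S`-cadet sequence of `T`. -/
def IsSCadetWindow {n m : ℕ} (S : Fin n → Fin n → Finset ℤ) (T : PlaneTree n m)
    (v : ℕ → Fin n) (a b : ℕ) : Prop :=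
  IsCadetWindow T v a b ∧
    ∀ i j : ℕ, a ≤ i → i < j → j ≤ b →
      (∑ p ∈ Finset.Icc (i + 1) j, T.lsib (v p)) ∉ Sminus S (v i) (v j)

/-- `(v 1, …, v k)` is a maximal cadet sequence of `T`: all children of `v k` are
leaves, and no node has `v 1` as its cadet. -/
def IsMaxCadetSeq {n m : ℕ} (T : PlaneTree n m) (k : ℕ) (v : ℕ → Fin n) : Prop :=
  IsCadetWindow T v 1 k ∧ (∀ w : Fin n, ¬ T.IsChild w (v k)) ∧ ∀ u : Fin n, ¬ T.IsCadet u (v 1)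

/-- `(v a, …, v b)` is a maximal `S`-cadet sequence inside the ambient cadet sequence
`(v 1, …, v k)`. -/
def IsMaxSCadetWindow {n m : ℕ} (S : Fin n → Fin n → Finset ℤ) (T : PlaneTree n m)
    (k : ℕ) (v : ℕ → Fin n) (a b : ℕ) : Prop :=
  b ≤ k ∧ IsSCadetWindow S T v a b ∧
    (a = 1 ∨ ¬ IsSCadetWindow S T v (a - 1) b) ∧
    (b = k ∨ ¬ IsSCadetWindow S T v a (b + 1))

/-- `Y` is (the set of nodes of) a maximal `S`-cadet sequence of `T`. -/
def IsMaxSCadetSet {n m : ℕ} (S : Fin n → Fin n → Finset ℤ) (T : PlaneTree n m)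
    (Y : Finset (Fin n)) : Prop :=
  ∃ (k : ℕ) (v : ℕ → Fin n) (a b : ℕ), IsMaxCadetSeq T k v ∧ WindowInj v 1 k ∧
    IsMaxSCadetWindow S T k v a b ∧ Y = (Finset.Icc a b).image v

/-- `Y` is (the set of nodes of) a nonempty cadet sequence of `T`. -/
def IsCadetSeqSet {n m : ℕ} (T : PlaneTree n m) (Y : Finset (Fin n)) : Prop :=
  ∃ (k : ℕ) (v : ℕ → Fin n), IsCadetWindow T v 1 k ∧ WindowInj v 1 k ∧
    Y = (Finset.Icc 1 k).image v

/-- `X` is (the set of nodes of) an `S`-connected cadet sequence of `T`: it is a cadet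
sequence, every maximal `S`-cadet sequence is disjoint from it or contained in it, and no
cadet sequence with this property is properly contained in it. -/
def SConnected {n m : ℕ} (S : Fin n → Fin n → Finset ℤ) (T : PlaneTree n m)
    (X : Finset (Fin n)) : Prop :=
  IsCadetSeqSet T X ∧
    (∀ Y, IsMaxSCadetSet S T Y → X ∩ Y = ∅ ∨ Y ⊆ X) ∧
    ∀ X', IsCadetSeqSet T X' → (∀ Y, IsMaxSCadetSet S T Y → X' ∩ Y = ∅ ∨ Y ⊆ X') →
      X' ⊆ X → X' = X

/-- `Y` is (the set of nodes of) an `S`-cadet sequence of `T` (a possible box). -/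
def IsSBox {n m : ℕ} (S : Fin n → Fin n → Finset ℤ) (T : PlaneTree n m)
    (Y : Finset (Fin n)) : Prop :=
  ∃ (k : ℕ) (v : ℕ → Fin n), IsSCadetWindow S T v 1 k ∧ WindowInj v 1 k ∧
    Y = (Finset.Icc 1 k).image v

/-- `B` is an `S`-boxing of the set of nodes `X`: a partition of `X` into
`S`-cadet sequences. -/
def IsSBoxingOf {n m : ℕ} (S : Fin n → Fin n → Finset ℤ) (T : PlaneTree n m)
    (X : Finset (Fin n)) (B : Finset (Finset (Fin n))) : Prop :=
  (∀ Y ∈ B, IsSBox S T Y ∧ Y ⊆ X) ∧ ∀ u ∈ X, ∃! Y, Y ∈ B ∧ u ∈ Y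

/-- The contribution `r_S(X)` of a cadet sequence with (injective) node set `X`
(whose length is `X.card`): `∑_{B ∈ U_S(X)} (-1)^(|X| - |B|)`. -/
noncomputable def contrib {n m : ℕ} (S : Fin n → Fin n → Finset ℤ) (T : PlaneTree n m)
    (X : Finset (Fin n)) : ℤ :=
  ∑ B : Finset (Finset (Fin n)),
    if IsSBoxingOf S T X B then (-1 : ℤ) ^ (X.card - B.card) else 0

/-- The contribution `r_S(T) = ∑_{B ∈ U_S(T)} (-1)^(n - |B|)` of the tree `T`. -/
noncomputable def treeContrib {n m : ℕ} (S : Fin n → Fin n → Finset ℤ)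
    (T : PlaneTree n m) : ℤ :=
  contrib S T Finset.univ

/-- The tuple `S` is transitive. -/
def TransitiveS {n : ℕ} (S : Fin n → Fin n → Finset ℤ) : Prop :=
  ∀ i j k : Fin n, i ≠ j → j ≠ k → i ≠ k →
    ∀ s t : ℕ, s ∉ Sminus S i j → t ∉ Sminus S j k → s + t ∉ Sminus S i k

/-- The arrangement `A_S` is almost transitive (`(i : ℕ) = 0` encodes "`i` is the node `1`"). -/
def AlmostTransitive {n : ℕ} (S : Fin n → Fin n → Finset ℤ) : Prop :=
  ∀ i j k : Fin n, i ≠ j → j ≠ k → i ≠ k → (i : ℕ) ≠ 0 → (k : ℕ) ≠ 0 →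
    ∀ s t : ℕ, s ∉ Sminus S i j → t ∉ Sminus S j k → s + t ∉ Sminus S i k

/-- `A_S` is an Ish-type arrangement: `0 ∈ Sᵢⱼ` for all `i < j`, and `Sᵢⱼ = {0}`
whenever `1 < i < j`. -/
def IshType {n : ℕ} (S : Fin n → Fin n → Finset ℤ) : Prop :=
  (∀ i j : Fin n, i < j → (0 : ℤ) ∈ S i j) ∧
    ∀ i j : Fin n, 0 < (i : ℕ) → i < j → S i j = {0}

/-- `A_S` is a nested Ish arrangement. -/
def NestedIsh {n : ℕ} (S : Fin n → Fin n → Finset ℤ) : Prop :=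
  IshType S ∧ ∀ i j k : Fin n, (i : ℕ) = 0 → 0 < (j : ℕ) → j < k → S i j ⊆ S i k

/-- The lower inefficiency `E_l(T)`: the number of lower inefficient nodes of `T`,
i.e. nodes `w` that are left siblings of the node `1` with `lsib w ∉ S⁻_{w,1}`. -/
noncomputable def Elow {n m : ℕ} [NeZero n] (S : Fin n → Fin n → Finset ℤ)
    (T : PlaneTree n m) : ℕ :=
  (Finset.univ.filter fun w : Fin n =>
    w ≠ T.root ∧ (0 : Fin n) ≠ T.root ∧ T.parent w = T.parent 0 ∧ T.pos w < T.pos 0 ∧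
      T.lsib w ∉ Sminus S w 0).card

/-- The upper inefficiency `E_u(T)`: the number of upper inefficient nodes of `T`,
i.e. nodes `w` with parent the node `1` that are not the cadet of `1`, with
`lsib w ∉ S⁻_{1,w}`. -/
noncomputable def Eup {n m : ℕ} [NeZero n] (S : Fin n → Fin n → Finset ℤ)
    (T : PlaneTree n m) : ℕ :=
  (Finset.univ.filter fun w : Fin n =>
    T.IsChild w 0 ∧ ¬ T.IsCadet 0 w ∧ T.lsib w ∉ Sminus S 0 w).card

/-- The class `S(e_l, ℓ_l, e_u, ℓ_u)` of trees in `T^(m)(n)` with nonzero contribution,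
lower/upper inefficiencies `e_l, e_u` and lower/upper 1-lengths `ℓ_l, ℓ_u` (the latter
expressed via the maximal `S`-cadet sequence `{v_{j-ℓ_l}, …, v_j, …, v_{j+ℓ_u}}`
around the node `1 = v j` inside its maximal cadet sequence `(v 1, …, v t)`). -/
def ClassS {n : ℕ} [NeZero n] (S : Fin n → Fin n → Finset ℤ) (el ll eu lu : ℕ) :
    Set (PlaneTree n (mOf S)) :=
  {T | treeContrib S T ≠ 0 ∧ Elow S T = el ∧ Eup S T = eu ∧
    ∃ (t : ℕ) (v : ℕ → Fin n) (j : ℕ), IsMaxCadetSeq T t v ∧ WindowInj v 1 t ∧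
      1 ≤ j ∧ j ≤ t ∧ v j = 0 ∧ ll < j ∧ j + lu ≤ t ∧
      IsMaxSCadetWindow S T t v (j - ll) (j + lu)}

/-- The complement in `ℝ^n` of the union of the hyperplanes `xᵢ - xⱼ = s`
(`i < j`, `s ∈ S i j`) of the arrangement `A_S`. -/
def complementSet {n : ℕ} (S : Fin n → Fin n → Finset ℤ) : Set (Fin n → ℝ) :=
  {x | ∀ i j : Fin n, i < j → ∀ s ∈ S i j, x i - x j ≠ (s : ℝ)}

/-- The number of regions `r_S` of the arrangement `A_S`: the number of connected
components of the complement of its hyperplanes. -/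
noncomputable def numRegions {n : ℕ} (S : Fin n → Fin n → Finset ℤ) : ℕ :=
  Nat.card (ConnectedComponents ↥(complementSet S))

/-- A rooted labeled plane tree with `n` nodes and arbitrary numbers of children:
`nchild u` is the total number of (linearly ordered) children of the node `u`, and
`pos v` the position of the node `v` among the children of its parent (so
`lsib v = pos v` and `rsib v = nchild (parent v) - 1 - pos v`). Children not occupied
by nodes are unlabeled leaves. -/
structure LPTree (n : ℕ) where
  root : Fin n
  parent : Fin n → Fin n
  pos : Fin n → ℕ
  nchild : Fin n → ℕ
  parent_root : parent root = root
  reaches_root : ∀ v : Fin n, ∃ k : ℕ, parent^[k] v = root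
  pos_lt : ∀ v : Fin n, v ≠ root → pos v < nchild (parent v)
  pos_inj : ∀ v w : Fin n, v ≠ root → w ≠ root → parent v = parent w → pos v = pos w → v = w

/-- Membership in the set `𝔗(S)`: the root is the node `1`, the node `1` has `2m+2`
children, every other node has exactly one child, and every node `k ≠ 1` satisfies
`lsib k ∈ S⁻₁ₖ` or `rsib k ∈ S⁻ₖ₁`. -/
def IsFrakT {n : ℕ} [NeZero n] (S : Fin n → Fin n → Finset ℤ) (T : LPTree n) : Prop :=
  T.root = 0 ∧ T.nchild 0 = 2 * mOf S + 2 ∧ (∀ v : Fin n, v ≠ 0 → T.nchild v = 1) ∧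
    ∀ v : Fin n, v ≠ 0 →
      (T.pos v ∈ Sminus S 0 v ∨ (T.nchild (T.parent v) - 1 - T.pos v) ∈ Sminus S v 0)

/-- For an `S`-connected cadet sequence `(v 1, …, v k)` whose maximal `S`-cadet
sequences are the windows `[a r, b r]` (`1 ≤ r ≤ k'`, in increasing order of last index),
`LastIdx a b k' j` is the index of the largest-indexed node of `X_j \ X_{j+1}`
(with `X_{k'+1} = {0}` containing no node of the sequence). -/
def LastIdx (a b : ℕ → ℕ) (k' j : ℕ) : ℕ :=
  ((Finset.Icc (a j) (b j)) \
    (if j = k' then (∅ : Finset ℕ) else Finset.Icc (a (j + 1)) (b (j + 1)))).sup id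

/-- `X_i` reaches `X_j`: the parent of the largest-indexed node of `X_j \ X_{j+1}`
belongs to `X_i`, with the conventions `X_0 = {0}`, `parent (v 1) = 0`
(the index `0` plays the role of `X_0`). -/
def Reaches (a b : ℕ → ℕ) (k' i j : ℕ) : Prop :=
  i < j ∧ j ≤ k' ∧
    ((i = 0 ∧ LastIdx a b k' j = 1) ∨
      (1 ≤ i ∧ 2 ≤ LastIdx a b k' j ∧ a i ≤ LastIdx a b k' j - 1 ∧
        LastIdx a b k' j - 1 ≤ b i))

/-- A successful run of the algorithm: `idx 0 = 0`; at each step, the next term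
`idx (j+1)` is the smallest-indexed maximal `S`-cadet sequence reached by `X_{idx j}`
but not reached by any `X_{idx l}` with `l < j`; the run terminates at `k'`
after `t` steps. -/
def AlgRun (a b : ℕ → ℕ) (k' t : ℕ) (idx : ℕ → ℕ) : Prop :=
  idx 0 = 0 ∧ idx t = k' ∧ (∀ j, j < t → idx j ≠ k') ∧
    ∀ j, j < t →
      Reaches a b k' (idx j) (idx (j + 1)) ∧
        (∀ l, l < j → ¬ Reaches a b k' (idx l) (idx (j + 1))) ∧
        ∀ r, r < idx (j + 1) → Reaches a b k' (idx j) r → ∃ l, l < j ∧ Reaches a b k' (idx l) r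

/-- Condition (2) of Proposition 4.5 (with lower 1-length `i` and upper 1-length `k`),
for the maximal cadet sequence `(v 1, …, v t)` containing the node `1 = v j`. -/
def Cond9 {n m : ℕ} (S : Fin n → Fin n → Finset ℤ) (T : PlaneTree n m)
    (t : ℕ) (v : ℕ → Fin n) (j i k : ℕ) : Prop :=
  i < j ∧ k ≤ t - j ∧
    (∀ s : ℕ, 1 ≤ s → s ≤ t → (s < j - i - 1 ∨ j + k + 1 < s) →
      IsMaxSCadetWindow S T t v s s) ∧
    IsMaxSCadetWindow S T t v (j - i) (j + k) ∧
    (j - i ≠ 1 → IsMaxSCadetWindow S T t v (j - i - 1) (j - 1)) ∧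
    (j - i = 1 → i = 0) ∧
    (j + k ≠ t → IsMaxSCadetWindow S T t v (j + 1) (j + k + 1)) ∧
    (j + k = t → k = 0) ∧
    ∀ a' b' : ℕ, IsMaxSCadetWindow S T t v a' b' →
      ((a' = b' ∧ (a' < j - i - 1 ∨ j + k + 1 < a')) ∨ (a' = j - i ∧ b' = j + k) ∨
        (j - i ≠ 1 ∧ a' = j - i - 1 ∧ b' = j - 1) ∨ (j + k ≠ t ∧ a' = j + 1 ∧ b' = j + k + 1))


namespace Aux19

open Finset

variable {n m : ℕ}

theorem cadet_unique (T : PlaneTree n m) {u v v' : Fin n}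
    (h : T.IsCadet u v) (h' : T.IsCadet u v') : v = v' :=
  T.pos_inj v v' h.1.1 h'.1.1 (h.1.2.trans h'.1.2.symm)
    (le_antisymm (h'.2 v h.1) (h.2 v' h'.1))

theorem prev_unique (T : PlaneTree n m) {u u' v : Fin n}
    (h : T.IsCadet u v) (h' : T.IsCadet u' v) : u = u' :=
  h.1.2.symm.trans h'.1.2

noncomputable def depth (T : PlaneTree n m) (v : Fin n) : ℕ := Nat.find (T.reaches_root v)

theorem depth_spec (T : PlaneTree n m) (v : Fin n) :
    T.parent^[depth T v] v = T.root := by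
  have h := Nat.find_spec (T.reaches_root v)
  exact h

theorem depth_le (T : PlaneTree n m) {v : Fin n} {k : ℕ} (h : T.parent^[k] v = T.root) :
    depth T v ≤ k := Nat.find_min' (T.reaches_root v) h

theorem depth_child (T : PlaneTree n m) {v u : Fin n} (h : T.IsChild v u) :
    depth T v = depth T u + 1 := by
  have hs : T.parent^[depth T u + 1] v = T.root := by
    rw [Function.iterate_succ_apply, h.2]
    exact depth_spec T u
  have h1 : depth T v ≤ depth T u + 1 := depth_le T hs
  have h0 : depth T v ≠ 0 := by
    intro h0
    have hsp := depth_spec T v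
    rw [h0] at hsp
    exact h.1 hsp
  have he : depth T v = (depth T v - 1) + 1 := by omega
  have hse : T.parent^[(depth T v - 1) + 1] v = T.root := by
    rw [← he]
    exact depth_spec T v
  rw [Function.iterate_succ_apply, h.2] at hse
  have h2 : depth T u ≤ depth T v - 1 := depth_le T hse
  omega

def HasPrev (T : PlaneTree n m) (v : Fin n) : Prop := ∃ u, T.IsCadet u v

noncomputable def prevF (T : PlaneTree n m) (v : Fin n) : Fin n :=
  if h : HasPrev T v then h.choose else v

theorem isCadet_prevF {T : PlaneTree n m} {v : Fin n} (h : HasPrev T v) :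
    T.IsCadet (prevF T v) v := by
  rw [prevF, dif_pos h]; exact h.choose_spec

theorem prevF_eq {T : PlaneTree n m} {u v : Fin n} (h : T.IsCadet u v) : prevF T v = u :=
  prev_unique T (isCadet_prevF ⟨u, h⟩) h

noncomputable def chain (T : PlaneTree n m) (u : Fin n) (i : ℕ) : Fin n := (prevF T)^[i] u

theorem chain_zero (T : PlaneTree n m) (u : Fin n) : chain T u 0 = u := rfl

theorem chain_succ (T : PlaneTree n m) (u : Fin n) (i : ℕ) :
    chain T u (i + 1) = prevF T (chain T u i) := Function.iterate_succ_apply' _ _ _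

theorem chain_chain (T : PlaneTree n m) (u : Fin n) (b j : ℕ) :
    chain T (chain T u b) j = chain T u (b + j) := by
  rw [chain, chain, chain, ← Function.iterate_add_apply, Nat.add_comm]

theorem depth_chain_succ {T : PlaneTree n m} {u : Fin n} {i : ℕ}
    (h : HasPrev T (chain T u i)) :
    depth T (chain T u i) = depth T (chain T u (i + 1)) + 1 := by
  rw [chain_succ]
  exact depth_child T (isCadet_prevF h).1

theorem exists_not_hasPrev (T : PlaneTree n m) (u : Fin n) :
    ∃ i, ¬ HasPrev T (chain T u i) := by
  by_contra h
  push_neg at h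
  have key : ∀ i, depth T (chain T u i) + i = depth T u := by
    intro i
    induction i with
    | zero => simp [chain_zero]
    | succ k ih =>
      have := depth_chain_succ (h k)
      omega
  have := key (depth T u + 1)
  omega

noncomputable def Rof (T : PlaneTree n m) (u : Fin n) : ℕ := Nat.find (exists_not_hasPrev T u)

theorem not_hasPrev_Rof (T : PlaneTree n m) (u : Fin n) :
    ¬ HasPrev T (chain T u (Rof T u)) := by
  have h := Nat.find_spec (exists_not_hasPrev T u)
  exact h

theorem hasPrev_of_lt {T : PlaneTree n m} {u : Fin n} {i : ℕ} (h : i < Rof T u) :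
    HasPrev T (chain T u i) := by
  have := Nat.find_min (exists_not_hasPrev T u) h
  simpa using this

theorem Rof_eq {T : PlaneTree n m} {y : Fin n} {r : ℕ}
    (h1 : ∀ i < r, HasPrev T (chain T y i)) (h2 : ¬ HasPrev T (chain T y r)) :
    Rof T y = r := by
  have hle : Rof T y ≤ r := Nat.find_min' _ h2
  rcases Nat.lt_or_ge (Rof T y) r with h | h
  · exact absurd (h1 _ h) (not_hasPrev_Rof T y)
  · omega

theorem depth_chain {T : PlaneTree n m} {u : Fin n} :
    ∀ i ≤ Rof T u, depth T (chain T u i) + i = depth T u := by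
  intro i
  induction i with
  | zero => intro _; simp [chain_zero]
  | succ k ih =>
    intro hk
    have h1 := ih (by omega)
    have h2 := depth_chain_succ (hasPrev_of_lt (u := u) (show k < Rof T u by omega))
    omega

theorem chain_injOn {T : PlaneTree n m} {u : Fin n} {i j : ℕ}
    (hi : i ≤ Rof T u) (hj : j ≤ Rof T u) (hij : chain T u i = chain T u j) : i = j := by
  have h1 := depth_chain i hi
  have h2 := depth_chain j hj
  rw [hij] at h1
  omega

theorem chain_cadet {T : PlaneTree n m} {u : Fin n} {i : ℕ} (h : i < Rof T u) :
    T.IsCadet (chain T u (i + 1)) (chain T u i) := by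
  rw [chain_succ]
  exact isCadet_prevF (hasPrev_of_lt h)

noncomputable def pset (T : PlaneTree n m) (u : Fin n) (a : ℕ) : Finset (Fin n) :=
  (Finset.range (a + 1)).image (chain T u)

theorem mem_pset {T : PlaneTree n m} {u x : Fin n} {a : ℕ} :
    x ∈ pset T u a ↔ ∃ i ≤ a, chain T u i = x := by
  simp [pset, Nat.lt_succ_iff]

theorem u_mem_pset (T : PlaneTree n m) (u : Fin n) (a : ℕ) : u ∈ pset T u a :=
  mem_pset.mpr ⟨0, Nat.zero_le _, rfl⟩

theorem pset_zero (T : PlaneTree n m) (u : Fin n) : pset T u 0 = {u} := by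
  simp [pset, Finset.range_one, chain_zero]

theorem card_pset {T : PlaneTree n m} {u : Fin n} {a : ℕ} (ha : a ≤ Rof T u) :
    (pset T u a).card = a + 1 := by
  have hinj : Set.InjOn (chain T u) (Finset.range (a + 1)) := by
    intro i hi j hj hij
    simp only [Finset.coe_range, Set.mem_Iio] at hi hj
    exact chain_injOn (by omega) (by omega) hij
  rw [pset, Finset.card_image_of_injOn hinj, Finset.card_range]

def Closed (T : PlaneTree n m) (X : Finset (Fin n)) : Prop :=
  ∀ x z : Fin n, T.IsCadet x z → z ∈ X → x ∈ X

theorem chain_mem_of_closed {T : PlaneTree n m} {X : Finset (Fin n)} {u : Fin n}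
    (hX : Closed T X) (hu : u ∈ X) : ∀ i ≤ Rof T u, chain T u i ∈ X := by
  intro i
  induction i with
  | zero => intro _; exact hu
  | succ k ih =>
    intro hk
    exact hX _ _ (chain_cadet (by omega)) (ih (by omega))

theorem pset_subset {T : PlaneTree n m} {X : Finset (Fin n)} {u : Fin n} {a : ℕ}
    (hX : Closed T X) (hu : u ∈ X) (ha : a ≤ Rof T u) : pset T u a ⊆ X := by
  intro x hx
  obtain ⟨i, hi, rfl⟩ := mem_pset.mp hx
  exact chain_mem_of_closed hX hu i (by omega)

theorem sbox_nonempty {S : Fin n → Fin n → Finset ℤ} {T : PlaneTree n m} {Y : Finset (Fin n)}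
    (hY : IsSBox S T Y) : Y.Nonempty := by
  obtain ⟨k, v, hw, _, rfl⟩ := hY
  exact ⟨v 1, Finset.mem_image.mpr ⟨1, Finset.mem_Icc.mpr ⟨le_refl 1, hw.1.2.1⟩, rfl⟩⟩

theorem sbox_singleton (S : Fin n → Fin n → Finset ℤ) (T : PlaneTree n m) (y : Fin n) :
    IsSBox S T {y} := by
  refine ⟨1, fun _ => y, ⟨⟨le_refl 1, le_refl 1, ?_⟩, ?_⟩, ?_, ?_⟩
  · intro p h1 h2; omega
  · intro i j h1 h2 h3; omega
  · intro p q h1 h2 h3 h4 _; omega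
  · simp

theorem sbox_master {S : Fin n → Fin n → Finset ℤ} {T : PlaneTree n m} {Y : Finset (Fin n)}
    {y : Fin n} (hY : IsSBox S T Y) (hy : y ∈ Y) (hcad : ∀ z, T.IsCadet y z → z ∉ Y) :
    ∃ k v, IsSCadetWindow S T v 1 k ∧ WindowInj v 1 k ∧ Y = (Finset.Icc 1 k).image v ∧
      Y.card = k ∧ k - 1 ≤ Rof T y ∧ ∀ i ≤ k - 1, chain T y i = v (k - i) := by
  obtain ⟨k, v, hw, hinj, rfl⟩ := hY
  have hk : 1 ≤ k := hw.1.2.1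
  have hcadet := hw.1.2.2
  obtain ⟨p₀, hp₀, hyv⟩ := Finset.mem_image.mp hy
  rw [Finset.mem_Icc] at hp₀
  have hyk : v k = y := by
    rcases Nat.lt_or_ge p₀ k with hlt | hge
    · exfalso
      have hc := hcadet (p₀ + 1) (by omega) (by omega)
      rw [Nat.add_sub_cancel] at hc
      rw [hyv] at hc
      exact hcad _ hc (Finset.mem_image.mpr ⟨p₀ + 1, Finset.mem_Icc.mpr ⟨by omega, by omega⟩, rfl⟩)
    · have h : p₀ = k := by omega
      rw [← h]; exact hyv
  have key : ∀ i, i ≤ k - 1 → chain T y i = v (k - i) := by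
    intro i hi
    induction i with
    | zero => rw [Nat.sub_zero]; exact hyk.symm
    | succ i ih =>
      have hvv := ih (by omega)
      have hc := hcadet (k - i) (by omega) (by omega)
      have hp : prevF T (v (k - i)) = v (k - i - 1) := prevF_eq hc
      rw [chain_succ, hvv, hp]
      congr 1 <;> omega
  have hasP : ∀ i, i < k - 1 → HasPrev T (chain T y i) := by
    intro i hi
    rw [key i (by omega)]
    exact ⟨v (k - i - 1), hcadet (k - i) (by omega) (by omega)⟩
  have hRk : k - 1 ≤ Rof T y := by
    by_contra hcon
    push_neg at hcon
    exact not_hasPrev_Rof T y (hasP _ hcon)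
  have hInj : Set.InjOn v (Finset.Icc 1 k) := by
    intro p hp q hq hpq
    rw [Finset.coe_Icc, Set.mem_Icc] at hp hq
    exact hinj p q hp.1 hp.2 hq.1 hq.2 hpq
  have hcard : ((Finset.Icc 1 k).image v).card = k := by
    rw [Finset.card_image_of_injOn hInj, Nat.card_Icc]
    omega
  exact ⟨k, v, hw, hinj, rfl, hcard, hRk, key⟩

theorem sbox_struct {S : Fin n → Fin n → Finset ℤ} {T : PlaneTree n m} {Y : Finset (Fin n)}
    {y : Fin n} (hY : IsSBox S T Y) (hy : y ∈ Y) (hcad : ∀ z, T.IsCadet y z → z ∉ Y) :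
    ∃ a, a ≤ Rof T y ∧ Y = pset T y a ∧ Y.card = a + 1 := by
  obtain ⟨k, v, hw, hinj, hYe, hcard, hRk, key⟩ := sbox_master hY hy hcad
  have hk : 1 ≤ k := hw.1.2.1
  refine ⟨k - 1, hRk, ?_, by omega⟩
  rw [hYe]
  ext x
  simp only [mem_pset, Finset.mem_image, Finset.mem_Icc]
  constructor
  · rintro ⟨p, hp, rfl⟩
    refine ⟨k - p, by omega, ?_⟩
    rw [key (k - p) (by omega)]
    congr 1
    omega
  · rintro ⟨i, hi, rfl⟩
    exact ⟨k - i, ⟨by omega, by omega⟩, (key i hi).symm⟩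

theorem sbox_shrink {S : Fin n → Fin n → Finset ℤ} {T : PlaneTree n m} {Y : Finset (Fin n)}
    {y : Fin n} (hY : IsSBox S T Y) (hy : y ∈ Y) (hcad : ∀ z, T.IsCadet y z → z ∉ Y)
    (h2 : 2 ≤ Y.card) : IsSBox S T (pset T y (Y.card - 2)) := by
  obtain ⟨k, v, hw, hinj, hYe, hcard, hRk, key⟩ := sbox_master hY hy hcad
  have hk2 : 2 ≤ k := by omega
  rw [hcard]
  refine ⟨k - 1, fun i => v (i + 1), ⟨⟨le_refl 1, by omega, ?_⟩, ?_⟩, ?_, ?_⟩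
  · intro p hp1 hp2
    show T.IsCadet (v (p - 1 + 1)) (v (p + 1))
    have h := hw.1.2.2 (p + 1) (by omega) (by omega)
    rw [Nat.add_sub_cancel] at h
    have e2 : p - 1 + 1 = p := by omega
    rw [e2]
    exact h
  · intro i j h1 hij h3
    show (∑ p ∈ Finset.Icc (i + 1) j, T.lsib (v (p + 1))) ∉ Sminus S (v (i + 1)) (v (j + 1))
    have h := hw.2 (i + 1) (j + 1) (by omega) (by omega) (by omega)
    have hmap : Finset.Icc (i + 1 + 1) (j + 1)
        = (Finset.Icc (i + 1) j).map ⟨fun p => p + 1, fun a b hab => Nat.succ_injective hab⟩ := by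
      ext x
      simp only [Finset.mem_map, Finset.mem_Icc, Function.Embedding.coeFn_mk]
      constructor
      · intro hx
        refine ⟨x - 1, by omega, ?_⟩
        show x - 1 + 1 = x
        omega
      · rintro ⟨p, hp, rfl⟩
        show i + 1 + 1 ≤ p + 1 ∧ p + 1 ≤ j + 1
        omega
    rw [hmap, Finset.sum_map] at h
    exact h
  · intro p q hp1 hp2 hq1 hq2 heq
    have := hinj (p + 1) (q + 1) (by omega) (by omega) (by omega) (by omega) heq
    omega
  · ext x
    simp only [mem_pset, Finset.mem_image, Finset.mem_Icc]
    constructor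
    · rintro ⟨i, hi, rfl⟩
      refine ⟨k - i - 1, ⟨by omega, by omega⟩, ?_⟩
      have e : k - i - 1 + 1 = k - i := by omega
      rw [e, ← key i (by omega)]
    · rintro ⟨p, hp, rfl⟩
      refine ⟨k - p - 1, by omega, ?_⟩
      rw [key (k - p - 1) (by omega)]
      congr 1
      omega

theorem boxing_card_le {S : Fin n → Fin n → Finset ℤ} {T : PlaneTree n m}
    {X : Finset (Fin n)} {B : Finset (Finset (Fin n))}
    (hB : IsSBoxingOf S T X B) : B.card ≤ X.card := by
  rcases B.eq_empty_or_nonempty with rfl | ⟨Y₀, hY₀⟩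
  · simp
  · obtain ⟨x₀, hx₀⟩ := sbox_nonempty (hB.1 Y₀ hY₀).1
    haveI : Inhabited (Fin n) := ⟨x₀⟩
    apply Finset.card_le_card_of_injOn (fun Y => if h : Y.Nonempty then h.choose else default)
    · intro Y hY
      have hne := sbox_nonempty (hB.1 Y hY).1
      simp only [dif_pos hne]
      exact (hB.1 Y hY).2 hne.choose_spec
    · intro Y hY Y' hY' hf
      rw [Finset.mem_coe] at hY hY'
      have hne := sbox_nonempty (hB.1 Y hY).1
      have hne' := sbox_nonempty (hB.1 Y' hY').1
      simp only [dif_pos hne, dif_pos hne'] at hf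
      have hx : hne.choose ∈ Y := hne.choose_spec
      have hx' : hne.choose ∈ Y' := hf ▸ hne'.choose_spec
      have hxX : hne.choose ∈ X := (hB.1 Y hY).2 hx
      obtain ⟨Z, hZ, huniq⟩ := hB.2 _ hxX
      exact (huniq Y ⟨hY, hx⟩).trans (huniq Y' ⟨hY', hx'⟩).symm

theorem boxing_erase {S : Fin n → Fin n → Finset ℤ} {T : PlaneTree n m}
    {X P : Finset (Fin n)} {B : Finset (Finset (Fin n))}
    (hB : IsSBoxingOf S T X B) (hP : P ∈ B) :
    IsSBoxingOf S T (X \ P) (B.erase P) := by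
  constructor
  · intro Y hY
    have hY' := Finset.mem_of_mem_erase hY
    refine ⟨(hB.1 Y hY').1, ?_⟩
    intro x hx
    have hxX : x ∈ X := (hB.1 Y hY').2 hx
    rw [Finset.mem_sdiff]
    refine ⟨hxX, fun hxP => ?_⟩
    obtain ⟨Z, hZ, huniq⟩ := hB.2 x hxX
    have h1 := huniq Y ⟨hY', hx⟩
    have h2 := huniq P ⟨hP, hxP⟩
    exact (Finset.ne_of_mem_erase hY) (h1.trans h2.symm)
  · intro x hx
    rw [Finset.mem_sdiff] at hx
    obtain ⟨Z, ⟨hZB, hxZ⟩, huniq⟩ := hB.2 x hx.1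
    have hZP : Z ≠ P := fun e => hx.2 (e ▸ hxZ)
    exact ⟨Z, ⟨Finset.mem_erase.mpr ⟨hZP, hZB⟩, hxZ⟩,
      fun Y hY => huniq Y ⟨Finset.mem_of_mem_erase hY.1, hY.2⟩⟩

theorem boxing_insert {S : Fin n → Fin n → Finset ℤ} {T : PlaneTree n m}
    {X P : Finset (Fin n)} {B' : Finset (Finset (Fin n))}
    (hB' : IsSBoxingOf S T (X \ P) B') (hP : IsSBox S T P) (hPX : P ⊆ X) :
    IsSBoxingOf S T X (insert P B') := by
  constructor
  · intro Y hY
    rcases Finset.mem_insert.mp hY with rfl | hYB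
    · exact ⟨hP, hPX⟩
    · exact ⟨(hB'.1 Y hYB).1, ((hB'.1 Y hYB).2).trans Finset.sdiff_subset⟩
  · intro x hx
    by_cases hxP : x ∈ P
    · refine ⟨P, ⟨Finset.mem_insert_self _ _, hxP⟩, ?_⟩
      rintro Y ⟨hY, hxY⟩
      rcases Finset.mem_insert.mp hY with rfl | hYB
      · rfl
      · exact absurd ((hB'.1 Y hYB).2 hxY) (by simp [Finset.mem_sdiff, hxP])
    · obtain ⟨Z, ⟨hZB, hxZ⟩, huniq⟩ := hB'.2 x (Finset.mem_sdiff.mpr ⟨hx, hxP⟩)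
      refine ⟨Z, ⟨Finset.mem_insert_of_mem hZB, hxZ⟩, ?_⟩
      rintro Y ⟨hY, hxY⟩
      rcases Finset.mem_insert.mp hY with rfl | hYB
      · exact absurd hxY hxP
      · exact huniq Y ⟨hYB, hxY⟩

theorem pset_not_mem_boxing {S : Fin n → Fin n → Finset ℤ} {T : PlaneTree n m}
    {X P : Finset (Fin n)} {B' : Finset (Finset (Fin n))}
    (hB' : IsSBoxingOf S T (X \ P) B') (hPne : P.Nonempty) : P ∉ B' := by
  intro hPB
  obtain ⟨x, hx⟩ := hPne
  have hmem := (hB'.1 P hPB).2 hx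
  rw [Finset.mem_sdiff] at hmem
  exact hmem.2 hx

theorem contrib_recursion (S : Fin n → Fin n → Finset ℤ) (T : PlaneTree n m)
    {X : Finset (Fin n)} {u : Fin n} (hX : Closed T X) (hu : u ∈ X)
    (hcad : ∀ z, T.IsCadet u z → z ∉ X) :
    contrib S T X = ∑ a ∈ Finset.range (Rof T u + 1),
      (if IsSBox S T (pset T u a) then (-1 : ℤ) ^ a * contrib S T (X \ pset T u a) else 0) := by
  rw [contrib]
  have step1 : ∀ B : Finset (Finset (Fin n)),
      (if IsSBoxingOf S T X B then (-1 : ℤ) ^ (X.card - B.card) else 0)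
        = ∑ a ∈ Finset.range (Rof T u + 1),
            (if pset T u a ∈ B ∧ IsSBoxingOf S T X B then (-1 : ℤ) ^ (X.card - B.card) else 0) := by
    intro B
    by_cases hB : IsSBoxingOf S T X B
    · obtain ⟨Y, ⟨hYB, huY⟩, huniq⟩ := hB.2 u hu
      have hYc : ∀ z, T.IsCadet u z → z ∉ Y :=
        fun z hz hzY => hcad z hz ((hB.1 Y hYB).2 hzY)
      obtain ⟨a₀, ha₀, hYp, hYcard⟩ := sbox_struct (hB.1 Y hYB).1 huY hYc
      rw [if_pos hB]
      have hterm : ∀ a ∈ Finset.range (Rof T u + 1),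
          (if pset T u a ∈ B ∧ IsSBoxingOf S T X B then (-1 : ℤ) ^ (X.card - B.card) else 0)
            = (if a = a₀ then (-1 : ℤ) ^ (X.card - B.card) else 0) := by
        intro a haR
        rw [Finset.mem_range] at haR
        by_cases hae : a = a₀
        · subst hae
          rw [if_pos ⟨hYp ▸ hYB, hB⟩, if_pos rfl]
        · rw [if_neg, if_neg hae]
          rintro ⟨hmem, -⟩
          have h1 : pset T u a = Y := huniq _ ⟨hmem, u_mem_pset T u a⟩
          have h2 : (pset T u a).card = a + 1 := card_pset (by omega)
          rw [h1, hYcard] at h2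
          exact hae (by omega)
      rw [Finset.sum_congr rfl hterm, Finset.sum_ite_eq' (Finset.range (Rof T u + 1)) a₀,
        if_pos (Finset.mem_range.mpr (by omega))]
    · rw [if_neg hB]
      symm
      apply Finset.sum_eq_zero
      intro a _
      rw [if_neg (fun hcon => hB hcon.2)]
  rw [Finset.sum_congr rfl (fun B _ => step1 B), Finset.sum_comm]
  refine Finset.sum_congr rfl ?_
  intro a haR
  rw [Finset.mem_range] at haR
  have haR' : a ≤ Rof T u := by omega
  by_cases hV : IsSBox S T (pset T u a)
  · rw [if_pos hV, contrib, Finset.mul_sum]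
    have hPX : pset T u a ⊆ X := pset_subset hX hu haR'
    have hPcard : (pset T u a).card = a + 1 := card_pset haR'
    have hPne : (pset T u a).Nonempty := ⟨u, u_mem_pset T u a⟩
    have hrhs : ∀ B' : Finset (Finset (Fin n)),
        (-1:ℤ)^a * (if IsSBoxingOf S T (X \ pset T u a) B'
            then (-1:ℤ)^((X \ pset T u a).card - B'.card) else 0)
          = (if IsSBoxingOf S T (X \ pset T u a) B'
            then (-1:ℤ)^a * (-1:ℤ)^((X \ pset T u a).card - B'.card) else 0) := by
      intro B'; split_ifs <;> simp
    rw [Finset.sum_congr rfl (fun B' _ => hrhs B'), ← Finset.sum_filter, ← Finset.sum_filter]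
    refine Finset.sum_bij' (fun B _ => B.erase (pset T u a))
      (fun B' _ => insert (pset T u a) B') ?_ ?_ ?_ ?_ ?_
    · intro B hBf
      simp only [Finset.mem_filter, Finset.mem_univ, true_and] at hBf ⊢
      exact boxing_erase hBf.2 hBf.1
    · intro B' hB'f
      simp only [Finset.mem_filter, Finset.mem_univ, true_and] at hB'f ⊢
      exact ⟨Finset.mem_insert_self _ _, boxing_insert hB'f hV hPX⟩
    · intro B hBf
      simp only [Finset.mem_filter, Finset.mem_univ, true_and] at hBf
      exact Finset.insert_erase hBf.1
    · intro B' hB'f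
      simp only [Finset.mem_filter, Finset.mem_univ, true_and] at hB'f
      exact Finset.erase_insert (pset_not_mem_boxing hB'f hPne)
    · intro B hBf
      simp only [Finset.mem_filter, Finset.mem_univ, true_and] at hBf
      obtain ⟨hPB, hBX⟩ := hBf
      have h1 : (X \ pset T u a).card = X.card - (a + 1) := by
        rw [Finset.card_sdiff_of_subset hPX, hPcard]
      have h2 : (B.erase (pset T u a)).card = B.card - 1 := Finset.card_erase_of_mem hPB
      have h3 : (B.erase (pset T u a)).card ≤ (X \ pset T u a).card :=
        boxing_card_le (boxing_erase hBX hPB)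
      have h4 : a + 1 ≤ X.card := by
        have := Finset.card_le_card hPX
        omega
      have h5 : 1 ≤ B.card := Finset.card_pos.mpr ⟨_, hPB⟩
      rw [← pow_add]
      congr 1
      show X.card - B.card = a + ((X \ pset T u a).card - (B.erase (pset T u a)).card)
      omega
  · rw [if_neg hV]
    apply Finset.sum_eq_zero
    intro B _
    rw [if_neg]
    rintro ⟨hPB, hBX⟩
    exact hV (hBX.1 _ hPB).1

theorem contrib_empty (S : Fin n → Fin n → Finset ℤ) (T : PlaneTree n m) :
    contrib S T (∅ : Finset (Fin n)) = 1 := by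
  rw [contrib]
  rw [Finset.sum_eq_single (∅ : Finset (Finset (Fin n)))]
  · rw [if_pos, Finset.card_empty, Finset.card_empty]
    · norm_num
    · exact ⟨fun Y hY => absurd hY (Finset.notMem_empty Y),
        fun x hx => absurd hx (Finset.notMem_empty x)⟩
  · intro B _ hBne
    rw [if_neg]
    intro hB
    obtain ⟨Y, hY⟩ := Finset.nonempty_iff_ne_empty.mpr hBne
    obtain ⟨x, hx⟩ := sbox_nonempty (hB.1 Y hY).1
    exact absurd ((hB.1 Y hY).2 hx) (Finset.notMem_empty x)
  · intro h
    exact absurd (Finset.mem_univ _) h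

theorem contrib_mem (S : Fin n → Fin n → Finset ℤ) (T : PlaneTree n m) :
    ∀ (N : ℕ) (X : Finset (Fin n)), X.card ≤ N → Closed T X →
      contrib S T X ∈ ({-1, 0, 1} : Set ℤ) := by
  intro N
  induction N with
  | zero =>
    intro X hc _
    rw [Finset.card_eq_zero.mp (Nat.le_zero.mp hc), contrib_empty]
    simp
  | succ N ih =>
    intro X hcN hX
    rcases X.eq_empty_or_nonempty with rfl | hne
    · rw [contrib_empty]; simp
    obtain ⟨u, huX, hmax⟩ := Finset.exists_max_image X (depth T) hne
    have hcad : ∀ z, T.IsCadet u z → z ∉ X := by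
      intro z hz hzX
      have h1 : depth T z = depth T u + 1 := depth_child T hz.1
      have h2 := hmax z hzX
      omega
    have hpsub : pset T u (Rof T u) ⊆ X := pset_subset hX huX le_rfl
    set Xb : ℕ → Finset (Fin n) := fun b =>
      (X \ pset T u (Rof T u)) ∪ (Finset.Icc b (Rof T u)).image (chain T u) with hXbdef
    have hXb_apply : ∀ b, Xb b
        = (X \ pset T u (Rof T u)) ∪ (Finset.Icc b (Rof T u)).image (chain T u) :=
      fun _ => rfl
    have hXb_sub : ∀ b, Xb b ⊆ X := by
      intro b x hx
      rw [hXb_apply] at hx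
      rcases Finset.mem_union.mp hx with h | h
      · exact (Finset.mem_sdiff.mp h).1
      · obtain ⟨j, hj, rfl⟩ := Finset.mem_image.mp h
        exact chain_mem_of_closed hX huX j (Finset.mem_Icc.mp hj).2
    have hXbR1 : ∀ b, Rof T u + 1 ≤ b → Xb b = X \ pset T u (Rof T u) := by
      intro b hb
      rw [hXb_apply, Finset.Icc_eq_empty (by omega), Finset.image_empty, Finset.union_empty]
    have hXb0 : Xb 0 = X := by
      have himg : (Finset.Icc 0 (Rof T u)).image (chain T u) = pset T u (Rof T u) := by
        ext x
        simp only [Finset.mem_image, Finset.mem_Icc, mem_pset]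
        constructor
        · rintro ⟨j, hj, rfl⟩; exact ⟨j, hj.2, rfl⟩
        · rintro ⟨i, hi, rfl⟩; exact ⟨i, ⟨Nat.zero_le _, hi⟩, rfl⟩
      rw [hXb_apply, himg, Finset.sdiff_union_of_subset hpsub]
    have hXbClosed : ∀ b, Closed T (Xb b) := by
      intro b x z hxz hzX
      have hzX0 : z ∈ X := hXb_sub b hzX
      rw [hXb_apply] at hzX ⊢
      rcases Finset.mem_union.mp hzX with hz1 | hz2
      · have hzp : z ∉ pset T u (Rof T u) := (Finset.mem_sdiff.mp hz1).2
        have hxX : x ∈ X := hX x z hxz hzX0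
        refine Finset.mem_union_left _ (Finset.mem_sdiff.mpr ⟨hxX, fun hxp => ?_⟩)
        obtain ⟨i, hiR, hix⟩ := mem_pset.mp hxp
        rcases Nat.eq_zero_or_pos i with rfl | hipos
        · rw [chain_zero] at hix
          subst hix
          exact hcad z hxz hzX0
        · have hc2 : T.IsCadet (chain T u i) (chain T u (i - 1)) := by
            have hcc := chain_cadet (u := u) (i := i - 1) (show i - 1 < Rof T u by omega)
            have e : i - 1 + 1 = i := by omega
            rwa [e] at hcc
          rw [hix] at hc2
          have hzw : z = chain T u (i - 1) := cadet_unique T hxz hc2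
          exact hzp (hzw ▸ mem_pset.mpr ⟨i - 1, by omega, rfl⟩)
      · obtain ⟨j, hj, rfl⟩ := Finset.mem_image.mp hz2
        rw [Finset.mem_Icc] at hj
        have hjR : j < Rof T u := by
          by_contra hcon
          have hje : j = Rof T u := by omega
          rw [hje] at hxz
          exact absurd ⟨x, hxz⟩ (not_hasPrev_Rof T u)
        have hx' : x = chain T u (j + 1) := prev_unique T hxz (chain_cadet hjR)
        exact Finset.mem_union_right _
          (Finset.mem_image.mpr ⟨j + 1, Finset.mem_Icc.mpr ⟨by omega, by omega⟩, hx'.symm⟩)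
    have hwbXb : ∀ b, b ≤ Rof T u → chain T u b ∈ Xb b := by
      intro b hb
      rw [hXb_apply]
      exact Finset.mem_union_right _
        (Finset.mem_image.mpr ⟨b, Finset.mem_Icc.mpr ⟨le_rfl, hb⟩, rfl⟩)
    have hcadXb : ∀ b, b ≤ Rof T u → ∀ z, T.IsCadet (chain T u b) z → z ∉ Xb b := by
      intro b hb z hz hzX
      have hzX' : z ∈ X := hXb_sub b hzX
      rcases Nat.eq_zero_or_pos b with rfl | hbpos
      · exact hcad z hz hzX'
      · have hc2 : T.IsCadet (chain T u b) (chain T u (b - 1)) := by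
          have hcc := chain_cadet (u := u) (i := b - 1) (show b - 1 < Rof T u by omega)
          have e : b - 1 + 1 = b := by omega
          rwa [e] at hcc
        have hzw : z = chain T u (b - 1) := cadet_unique T hz hc2
        subst hzw
        rw [hXb_apply] at hzX
        rcases Finset.mem_union.mp hzX with h1 | h2
        · exact (Finset.mem_sdiff.mp h1).2 (mem_pset.mpr ⟨b - 1, by omega, rfl⟩)
        · obtain ⟨j, hj, hjz⟩ := Finset.mem_image.mp h2
          rw [Finset.mem_Icc] at hj
          have := chain_injOn (u := u) (i := j) (j := b - 1) (by omega) (by omega) hjz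
          omega
    have hchain_w : ∀ b j, chain T (chain T u b) j = chain T u (b + j) :=
      fun b j => chain_chain T u b j
    have hRof_w : ∀ b, b ≤ Rof T u → Rof T (chain T u b) = Rof T u - b := by
      intro b hb
      apply Rof_eq
      · intro i hi
        rw [hchain_w]
        exact hasPrev_of_lt (by omega)
      · rw [hchain_w]
        have e : b + (Rof T u - b) = Rof T u := by omega
        rw [e]
        exact not_hasPrev_Rof T u
    have hpset_w : ∀ b a, pset T (chain T u b) a = (Finset.Icc b (b + a)).image (chain T u) := by
      intro b a
      ext x
      simp only [mem_pset, Finset.mem_image, Finset.mem_Icc]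
      constructor
      · rintro ⟨i, hi, rfl⟩
        exact ⟨b + i, ⟨by omega, by omega⟩, (hchain_w b i).symm⟩
      · rintro ⟨j, hj, rfl⟩
        refine ⟨j - b, by omega, ?_⟩
        rw [hchain_w]
        congr 1
        omega
    have hXbD : ∀ b a, b ≤ Rof T u → a ≤ Rof T u - b →
        Xb b \ pset T (chain T u b) a = Xb (b + a + 1) := by
      intro b a hb ha
      rw [hpset_w, hXb_apply, hXb_apply]
      ext x
      simp only [Finset.mem_sdiff, Finset.mem_union, Finset.mem_image, Finset.mem_Icc]
      constructor
      · rintro ⟨h1 | h2, h3⟩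
        · exact Or.inl h1
        · obtain ⟨j, hj, rfl⟩ := h2
          refine Or.inr ⟨j, ⟨?_, hj.2⟩, rfl⟩
          by_contra hlt
          exact h3 ⟨j, ⟨by omega, by omega⟩, rfl⟩
      · rintro (h1 | h2)
        · refine ⟨Or.inl h1, ?_⟩
          rintro ⟨j, hj, rfl⟩
          refine h1.2 (mem_pset.mpr ⟨j, ?_, rfl⟩)
          omega
        · obtain ⟨j, hj, rfl⟩ := h2
          refine ⟨Or.inr ⟨j, ⟨by omega, by omega⟩, rfl⟩, ?_⟩
          rintro ⟨j', hj', hjj⟩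
          have := chain_injOn (u := u) (i := j') (j := j) (by omega) (by omega) hjj
          omega
    have hcardX : X.card = (X \ pset T u (Rof T u)).card + (Rof T u + 1) := by
      have h1 := Finset.card_sdiff_of_subset hpsub
      have h2 := Finset.card_le_card hpsub
      have h3 : (pset T u (Rof T u)).card = Rof T u + 1 := card_pset le_rfl
      omega
    have hX'card : (X \ pset T u (Rof T u)).card ≤ N := by
      have hX1 : 1 ≤ X.card := Finset.card_pos.mpr hne
      omega
    have hX'closed : Closed T (X \ pset T u (Rof T u)) := by
      have hcl := hXbClosed (Rof T u + 1)
      rwa [hXbR1 _ le_rfl] at hcl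
    have hεmem : contrib S T (X \ pset T u (Rof T u)) = -1
        ∨ contrib S T (X \ pset T u (Rof T u)) = 0
        ∨ contrib S T (X \ pset T u (Rof T u)) = 1 := by
      have := ih _ hX'card hX'closed
      simpa [Set.mem_insert_iff, Set.mem_singleton_iff] using this
    have hrec : ∀ b, b ≤ Rof T u → contrib S T (Xb b)
        = ∑ a ∈ Finset.range (Rof T u - b + 1),
            (if IsSBox S T (pset T (chain T u b) a)
              then (-1:ℤ)^a * contrib S T (Xb (b + a + 1)) else 0) := by
      intro b hb
      have hXbb : Xb b \ pset T u (Rof T u) = Xb b \ pset T u (Rof T u) := rfl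
      rw [show contrib S T (Xb b) = contrib S T (Xb b) from rfl,
        contrib_recursion S T (hXbClosed b) (hwbXb b hb) (hcadXb b hb), hRof_w b hb]
      refine Finset.sum_congr rfl ?_
      intro a ha
      rw [Finset.mem_range] at ha
      rw [hXbD b a hb (by omega)]
    have hV0 : ∀ b, IsSBox S T (pset T (chain T u b) 0) := by
      intro b
      rw [pset_zero]
      exact sbox_singleton S T _
    have hVshrink : ∀ b, b ≤ Rof T u → ∀ a, a + 1 ≤ Rof T u - b →
        IsSBox S T (pset T (chain T u b) (a + 1)) → IsSBox S T (pset T (chain T u b) a) := by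
      intro b hb a ha hVa
      have hRb := hRof_w b hb
      have hcard : (pset T (chain T u b) (a + 1)).card = a + 2 :=
        card_pset (by rw [hRb]; omega)
      have hsubXb : pset T (chain T u b) (a + 1) ⊆ Xb b := by
        rw [hpset_w, hXb_apply]
        intro x hx
        obtain ⟨j, hj, rfl⟩ := Finset.mem_image.mp hx
        rw [Finset.mem_Icc] at hj
        exact Finset.mem_union_right _
          (Finset.mem_image.mpr ⟨j, Finset.mem_Icc.mpr ⟨hj.1, by omega⟩, rfl⟩)
      have hmem : chain T u b ∈ pset T (chain T u b) (a + 1) := u_mem_pset T _ _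
      have hcadY : ∀ z, T.IsCadet (chain T u b) z → z ∉ pset T (chain T u b) (a + 1) :=
        fun z hz hzY => hcadXb b hb z hz (hsubXb hzY)
      have h := sbox_shrink hVa hmem hcadY (by omega)
      rwa [hcard, Nat.add_sub_cancel] at h
    have hVdown : ∀ b, b ≤ Rof T u → ∀ a, a ≤ Rof T u - b →
        IsSBox S T (pset T (chain T u b) a) →
        ∀ a' ≤ a, IsSBox S T (pset T (chain T u b) a') := by
      intro b hb a
      induction a with
      | zero =>
        intro _ hVa a' ha'
        have : a' = 0 := Nat.le_zero.mp ha'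
        rw [this]
        exact hVa
      | succ k ihk =>
        intro hk hV a' ha'
        rcases Nat.eq_or_lt_of_le ha' with rfl | hlt
        · exact hV
        · exact ihk (by omega) (hVshrink b hb k (by omega) hV) a' (by omega)
    set M : ℕ → ℕ := fun b =>
      Nat.findGreatest (fun a => IsSBox S T (pset T (chain T u b) a)) (Rof T u - b) with hMdef
    have hMle : ∀ b, M b ≤ Rof T u - b := fun b =>
      Nat.findGreatest_le (P := fun a => IsSBox S T (pset T (chain T u b) a)) _
    have hMV : ∀ b, b ≤ Rof T u → IsSBox S T (pset T (chain T u b) (M b)) := by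
      intro b hb
      exact Nat.findGreatest_spec (P := fun a => IsSBox S T (pset T (chain T u b) a))
        (Nat.zero_le _) (hV0 b)
    have hViff : ∀ b, b ≤ Rof T u → ∀ a, a ≤ Rof T u - b →
        (IsSBox S T (pset T (chain T u b) a) ↔ a ≤ M b) := by
      intro b hb a ha
      constructor
      · intro hVa
        exact Nat.le_findGreatest ha hVa
      · intro hle
        exact hVdown b hb (M b) (hMle b) (hMV b hb) a hle
    have hrec2 : ∀ b, b ≤ Rof T u → contrib S T (Xb b)
        = ∑ e ∈ Finset.Icc b (b + M b), (-1:ℤ)^(e - b) * contrib S T (Xb (e + 1)) := by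
      intro b hb
      rw [hrec b hb]
      have hstep : ∀ a ∈ Finset.range (Rof T u - b + 1),
          (if IsSBox S T (pset T (chain T u b) a)
            then (-1:ℤ)^a * contrib S T (Xb (b + a + 1)) else 0)
            = (if a ≤ M b then (-1:ℤ)^a * contrib S T (Xb (b + a + 1)) else 0) := by
        intro a ha
        rw [Finset.mem_range] at ha
        by_cases hVa : a ≤ M b
        · rw [if_pos ((hViff b hb a (by omega)).mpr hVa), if_pos hVa]
        · rw [if_neg (fun hh => hVa ((hViff b hb a (by omega)).mp hh)), if_neg hVa]
      rw [Finset.sum_congr rfl hstep, ← Finset.sum_filter]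
      have hfil : (Finset.range (Rof T u - b + 1)).filter (fun a => a ≤ M b)
          = Finset.range (M b + 1) := by
        ext a
        simp only [Finset.mem_filter, Finset.mem_range]
        have := hMle b
        omega
      rw [hfil]
      refine Finset.sum_nbij' (i := fun a => b + a) (j := fun e => e - b) ?_ ?_ ?_ ?_ ?_
      · intro a ha
        rw [Finset.mem_range] at ha
        show b + a ∈ Finset.Icc b (b + M b)
        rw [Finset.mem_Icc]
        omega
      · intro e he
        rw [Finset.mem_Icc] at he
        show e - b ∈ Finset.range (M b + 1)
        rw [Finset.mem_range]
        omega
      · intro a ha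
        show b + a - b = a
        omega
      · intro e he
        rw [Finset.mem_Icc] at he
        show b + (e - b) = e
        omega
      · intro a ha
        show (-1:ℤ)^a * contrib S T (Xb (b + a + 1))
          = (-1:ℤ)^(b + a - b) * contrib S T (Xb (b + a + 1))
        rw [Nat.add_sub_cancel_left]
    set Q : ℕ → ℤ := fun b =>
      ∑ e ∈ Finset.Icc b (Rof T u), (-1:ℤ)^e * contrib S T (Xb (e + 1)) with hQdef
    have hQ_apply : ∀ b, Q b
        = ∑ e ∈ Finset.Icc b (Rof T u), (-1:ℤ)^e * contrib S T (Xb (e + 1)) := fun _ => rfl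
    have hQsplit : ∀ b e, b ≤ e + 1 → e ≤ Rof T u →
        Q b = (∑ e' ∈ Finset.Icc b e, (-1:ℤ)^e' * contrib S T (Xb (e' + 1))) + Q (e + 1) := by
      intro b e h1 h2
      have hdis : Disjoint (Finset.Icc b e) (Finset.Icc (e + 1) (Rof T u)) := by
        rw [Finset.disjoint_left]
        intro x hx1 hx2
        rw [Finset.mem_Icc] at hx1 hx2
        omega
      have hunion : Finset.Icc b e ∪ Finset.Icc (e + 1) (Rof T u)
          = Finset.Icc b (Rof T u) := by
        ext x
        simp only [Finset.mem_union, Finset.mem_Icc]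
        omega
      rw [hQ_apply, hQ_apply, ← hunion, Finset.sum_union hdis]
    have hFQ : ∀ b, b ≤ Rof T u →
        (-1:ℤ)^b * contrib S T (Xb b) = Q b - Q (b + M b + 1) := by
      intro b hb
      have hMb := hMle b
      have hsplit := hQsplit b (b + M b) (by omega) (by omega)
      rw [hrec2 b hb, Finset.mul_sum]
      have hterm : ∀ e ∈ Finset.Icc b (b + M b),
          (-1:ℤ)^b * ((-1:ℤ)^(e - b) * contrib S T (Xb (e + 1)))
            = (-1:ℤ)^e * contrib S T (Xb (e + 1)) := by
        intro e he
        rw [Finset.mem_Icc] at he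
        rw [← mul_assoc, ← pow_add]
        have e1 : b + (e - b) = e := by omega
        rw [e1]
      rw [Finset.sum_congr rfl hterm]
      omega
    have hQR1 : Q (Rof T u + 1) = 0 := by
      rw [hQ_apply, Finset.Icc_eq_empty (by omega), Finset.sum_empty]
    have hQR : Q (Rof T u)
        = (-1:ℤ)^(Rof T u) * contrib S T (X \ pset T u (Rof T u)) := by
      rw [hQ_apply, Finset.Icc_self, Finset.sum_singleton, hXbR1 _ le_rfl]
    have hQmem : ∀ d b, b + d = Rof T u + 1 →
        (Q b = 0 ∨ Q b = (-1:ℤ)^(Rof T u) * contrib S T (X \ pset T u (Rof T u))) := by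
      intro d
      induction d using Nat.strong_induction_on with
      | _ d ihd =>
        intro b hb
        by_cases hd0 : d = 0
        · have hbe : b = Rof T u + 1 := by omega
          rw [hbe, hQR1]
          exact Or.inl rfl
        by_cases hd1 : d = 1
        · have hbe : b = Rof T u := by omega
          rw [hbe, hQR]
          exact Or.inr rfl
        have hble : b + 1 ≤ Rof T u := by omega
        have hsplit := hQsplit b b (by omega) (by omega)
        rw [Finset.Icc_self, Finset.sum_singleton] at hsplit
        have hfq := hFQ (b + 1) hble
        have hidx : b + 1 + M (b + 1) + 1 = b + M (b + 1) + 2 := by omega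
        rw [hidx, pow_succ] at hfq
        have hQb : Q b = Q (b + M (b + 1) + 2) := by linarith [hsplit, hfq]
        have hle2 : b + M (b + 1) + 2 ≤ Rof T u + 1 := by
          have := hMle (b + 1)
          omega
        have := ihd (Rof T u + 1 - (b + M (b + 1) + 2)) (by omega)
          (b + M (b + 1) + 2) (by omega)
        rw [hQb]
        exact this
    have hfinal := hFQ 0 (Nat.zero_le _)
    rw [pow_zero, one_mul, hXb0] at hfinal
    have q1 := hQmem (Rof T u + 1) 0 (by omega)
    have hM0 := hMle 0
    have q2 := hQmem (Rof T u + 1 - (0 + M 0 + 1)) (0 + M 0 + 1) (by omega)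
    have hcval : (-1:ℤ)^(Rof T u) * contrib S T (X \ pset T u (Rof T u)) = -1
        ∨ (-1:ℤ)^(Rof T u) * contrib S T (X \ pset T u (Rof T u)) = 0
        ∨ (-1:ℤ)^(Rof T u) * contrib S T (X \ pset T u (Rof T u)) = 1 := by
      rcases Nat.even_or_odd (Rof T u) with hev | hod
      · rw [hev.neg_one_pow, one_mul]
        exact hεmem
      · rw [hod.neg_one_pow]
        rcases hεmem with h | h | h <;> rw [h] <;> norm_num
    simp only [Set.mem_insert_iff, Set.mem_singleton_iff]
    rcases q1 with q1 | q1 <;> rcases q2 with q2 | q2 <;>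
      rcases hcval with hc | hc | hc <;> omega

end Aux19

/-- Theorem A: for an arbitrary deformation of the braid arrangement,
the contribution of any tree `T ∈ T^(m)(n)` is `0` or `±1`. -/
theorem statement_19 {n : ℕ} (S : Fin n → Fin n → Finset ℤ) (T : PlaneTree n (mOf S)) :
    treeContrib S T ∈ ({-1, 0, 1} : Set ℤ) := by
  have hcl : Aux19.Closed T Finset.univ := fun x z _ _ => Finset.mem_univ x
  have h := Aux19.contrib_mem S T (Finset.univ.card) Finset.univ le_rfl hcl
  simpa [treeContrib] using h
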